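/- For fixed Δ ≥ 0, ξ_m > 0, μ ∈ [0, ξ_m], the function f(T) = 2T·log(cosh(sqrt(ξ_m² + Δ²)/(2T))/cosh(sqrt(μ² + Δ²)/(2T))) + μ·∫₀^μ tanh(sqrt(ξ² + Δ²)/(2T))/sqrt(ξ² + Δ²) dξ is strictly decreasing in T on (0, ∞) provided μ < ξ_m. -/

import Mathlib

open Real intervalIntegral

private lemma my_tanh_strictMono : StrictMono Real.tanh := by
  intro x y h
  rw [Real.tanh_eq_sinh_div_cosh, Real.tanh_eq_sinh_div_cosh,
    div_lt_div_iff₀ (Real.cosh_pos x) (Real.cosh_pos y)]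
  have hs : 0 < Real.sinh (y - x) := Real.sinh_pos_iff.2 (sub_pos.2 h)
  rw [Real.sinh_sub] at hs
  linarith

private lemma my_continuous_tanh : Continuous Real.tanh := by
  have : Real.tanh = fun x => Real.sinh x / Real.cosh x :=
    funext Real.tanh_eq_sinh_div_cosh
  rw [this]
  exact Real.continuous_sinh.div Real.continuous_cosh fun x => (Real.cosh_pos x).ne'

private lemma my_tanh_nonneg {x : ℝ} (hx : 0 ≤ x) : 0 ≤ Real.tanh x := by
  have := my_tanh_strictMono.monotone hx
  simpa [Real.tanh_zero] using this

private lemma my_tanh_le_self {y : ℝ} (hy : 0 ≤ y) : Real.tanh y ≤ y := by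
  have hg : ∀ x : ℝ, HasDerivAt (fun x => x * Real.cosh x - Real.sinh x)
      (x * Real.sinh x) x := by
    intro x
    have h1 : HasDerivAt (fun x : ℝ => x * Real.cosh x)
        (1 * Real.cosh x + x * Real.sinh x) x :=
      (hasDerivAt_id x).mul (Real.hasDerivAt_cosh x)
    have h2 := h1.sub (Real.hasDerivAt_sinh x)
    rw [show x * Real.sinh x = 1 * Real.cosh x + x * Real.sinh x - Real.cosh x by ring]
    exact h2
  have hmono : MonotoneOn (fun x => x * Real.cosh x - Real.sinh x) (Set.Ici (0 : ℝ)) := by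
    apply monotoneOn_of_deriv_nonneg (convex_Ici 0)
      (Continuous.continuousOn (by continuity))
    · intro x hx
      exact (hg x).differentiableAt.differentiableWithinAt
    · intro x hx
      rw [interior_Ici, Set.mem_Ioi] at hx
      rw [(hg x).deriv]
      have := Real.sinh_pos_iff.2 hx
      positivity
  have h0 : (0 : ℝ) * Real.cosh 0 - Real.sinh 0 ≤ y * Real.cosh y - Real.sinh y :=
    hmono (Set.self_mem_Ici) hy hy
  simp only [zero_mul, Real.sinh_zero, zero_sub, neg_zero] at h0
  rw [Real.tanh_eq_sinh_div_cosh, div_le_iff₀ (Real.cosh_pos y)]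
  linarith

/-- FTC: `∫_b^a tanh(x/(2T)) = 2T log cosh(a/(2T)) - 2T log cosh(b/(2T))`. -/
private lemma ftc_tanh (T a b : ℝ) (hT : 0 < T) :
    (∫ x in b..a, Real.tanh (x / (2 * T)))
      = 2 * T * Real.log (Real.cosh (a / (2 * T)))
        - 2 * T * Real.log (Real.cosh (b / (2 * T))) := by
  have hT2 : (2 * T) ≠ 0 := by positivity
  have key : ∀ x : ℝ, HasDerivAt (fun x => 2 * T * Real.log (Real.cosh (x / (2 * T))))
      (Real.tanh (x / (2 * T))) x := by
    intro x
    have h1 : HasDerivAt (fun x : ℝ => x / (2 * T)) (1 / (2 * T)) x := by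
      simpa using (hasDerivAt_id x).div_const (2 * T)
    have h2 : HasDerivAt Real.cosh (Real.sinh (x / (2 * T))) (x / (2 * T)) :=
      Real.hasDerivAt_cosh _
    have h3 : HasDerivAt (fun x : ℝ => Real.cosh (x / (2 * T)))
        (Real.sinh (x / (2 * T)) * (1 / (2 * T))) x := by have := h2.comp x h1; exact this
    have h4 : HasDerivAt (fun x : ℝ => Real.log (Real.cosh (x / (2 * T))))
        ((Real.cosh (x / (2 * T)))⁻¹ * (Real.sinh (x / (2 * T)) * (1 / (2 * T)))) x :=
      by have := (Real.hasDerivAt_log (Real.cosh_pos (x / (2*T))).ne').comp x h3; exact this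
    have h5 := h4.const_mul (2 * T)
    rw [show Real.tanh (x / (2 * T)) = 2 * T * ((Real.cosh (x / (2 * T)))⁻¹ * (Real.sinh (x / (2 * T)) * (1 / (2 * T)))) by
      rw [Real.tanh_eq_sinh_div_cosh]
      field_simp]
    exact h5
  rw [intervalIntegral.integral_eq_sub_of_hasDerivAt (fun x _ => key x)
    ((my_continuous_tanh.comp (continuous_id.div_const (2 * T))).intervalIntegrable _ _)]

theorem finite_temp_rhs_strictAnti_in_T (Δ ξm μ : ℝ) (hΔ : 0 ≤ Δ) (hξ : 0 < ξm)
    (hμ0 : 0 ≤ μ) (hμ : μ < ξm) :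
    StrictAntiOn (fun T : ℝ =>
      2 * T * Real.log (Real.cosh (Real.sqrt (ξm ^ 2 + Δ ^ 2) / (2 * T))
          / Real.cosh (Real.sqrt (μ ^ 2 + Δ ^ 2) / (2 * T)))
        + μ * ∫ ξ in (0 : ℝ)..μ,
            Real.tanh (Real.sqrt (ξ ^ 2 + Δ ^ 2) / (2 * T)) / Real.sqrt (ξ ^ 2 + Δ ^ 2))
      (Set.Ioi 0) := by
  intro T₁ hT₁ T₂ hT₂ h12
  simp only [Set.mem_Ioi] at hT₁ hT₂
  set a := Real.sqrt (ξm ^ 2 + Δ ^ 2) with ha_def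
  set b := Real.sqrt (μ ^ 2 + Δ ^ 2) with hb_def
  have hb0 : 0 ≤ b := Real.sqrt_nonneg _
  have hba : b < a := by
    apply Real.sqrt_lt_sqrt (by positivity)
    have : μ ^ 2 < ξm ^ 2 := by nlinarith
    linarith
  have ha0 : 0 < a := lt_of_le_of_lt hb0 hba
  -- rewrite the log term as an integral
  have hlog : ∀ T : ℝ, 0 < T →
      2 * T * Real.log (Real.cosh (a / (2 * T)) / Real.cosh (b / (2 * T)))
        = ∫ x in b..a, Real.tanh (x / (2 * T)) := by
    intro T hT
    rw [Real.log_div (Real.cosh_pos _).ne' (Real.cosh_pos _).ne', ftc_tanh T a b hT]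
    ring
  -- strict inequality for the log/integral term
  have hstrict : (∫ x in b..a, Real.tanh (x / (2 * T₂)))
      < ∫ x in b..a, Real.tanh (x / (2 * T₁)) := by
    have hcont : ∀ T : ℝ, Continuous fun x : ℝ => Real.tanh (x / (2 * T)) := fun T =>
      my_continuous_tanh.comp (continuous_id.div_const _)
    apply intervalIntegral.integral_lt_integral_of_continuousOn_of_le_of_exists_lt hba
      (hcont T₂).continuousOn (hcont T₁).continuousOn
    · intro x hx
      apply my_tanh_strictMono.monotone
      have hx0 : 0 < x := lt_of_le_of_lt hb0 hx.1
      rw [div_le_div_iff₀ (by positivity) (by positivity)]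
      nlinarith
    · refine ⟨a, Set.right_mem_Icc.2 hba.le, my_tanh_strictMono ?_⟩
      rw [div_lt_div_iff₀ (by positivity) (by positivity)]
      nlinarith
  -- integrability of the μ-integrand
  have hint : ∀ T : ℝ, 0 < T → IntervalIntegrable
      (fun ξ => Real.tanh (Real.sqrt (ξ ^ 2 + Δ ^ 2) / (2 * T)) / Real.sqrt (ξ ^ 2 + Δ ^ 2))
      MeasureTheory.volume 0 μ := by
    intro T hT
    rw [intervalIntegrable_iff_integrableOn_Ioc_of_le hμ0]
    apply MeasureTheory.Integrable.mono' (g := fun _ => 1 / (2 * T))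
      (MeasureTheory.integrable_const _)
    · apply Measurable.aestronglyMeasurable
      exact ((my_continuous_tanh.measurable.comp
        (((measurable_id.pow_const 2).add_const _).sqrt.div_const _)).div
        ((measurable_id.pow_const 2).add_const _).sqrt)
    · filter_upwards with ξ
      set s := Real.sqrt (ξ ^ 2 + Δ ^ 2) with hs_def
      have hs0 : 0 ≤ s := Real.sqrt_nonneg _
      rcases eq_or_lt_of_le hs0 with h | h
      · rw [← h]
        simp only [div_zero, norm_zero]
        positivity
      · have htle : Real.tanh (s / (2 * T)) ≤ s / (2 * T) :=
          my_tanh_le_self (by positivity)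
        have h0 : 0 ≤ Real.tanh (s / (2 * T)) := my_tanh_nonneg (by positivity)
        rw [Real.norm_eq_abs, abs_of_nonneg (by positivity)]
        rw [div_le_div_iff₀ h (by positivity)]
        calc Real.tanh (s / (2 * T)) * (2 * T)
            ≤ s / (2 * T) * (2 * T) := by
              exact mul_le_mul_of_nonneg_right htle (by positivity)
          _ = s := by field_simp
          _ = 1 * s := (one_mul s).symm
  -- monotonicity of the μ-integral term
  have hmono : (∫ ξ in (0 : ℝ)..μ,
        Real.tanh (Real.sqrt (ξ ^ 2 + Δ ^ 2) / (2 * T₂)) / Real.sqrt (ξ ^ 2 + Δ ^ 2))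
      ≤ ∫ ξ in (0 : ℝ)..μ,
        Real.tanh (Real.sqrt (ξ ^ 2 + Δ ^ 2) / (2 * T₁)) / Real.sqrt (ξ ^ 2 + Δ ^ 2) := by
    apply intervalIntegral.integral_mono_on hμ0 (hint T₂ hT₂) (hint T₁ hT₁)
    intro ξ hξ'
    set s := Real.sqrt (ξ ^ 2 + Δ ^ 2) with hs_def
    have hs0 : 0 ≤ s := Real.sqrt_nonneg _
    rcases eq_or_lt_of_le hs0 with h | h
    · rw [← h]; simp
    · rw [div_le_div_iff_of_pos_right h]
      apply my_tanh_strictMono.monotone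
      rw [div_le_div_iff₀ (by positivity) (by positivity)]
      nlinarith
  -- combine
  simp only
  rw [hlog T₁ hT₁, hlog T₂ hT₂]
  have := mul_le_mul_of_nonneg_left hmono hμ0
  linarith
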